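/- Let γ¹ : ℤ → ℝ² and γ² : ℤ → ℝ² be two discrete plane curves, and define z^m_n = det[γ¹_n, γ²_m] + Σ_k^n det[γ¹_{k−1}, γ¹_k] − Σ_k^m det[γ²_{k−1}, γ²_k] (bidirectional sums) and f^m_n = (γ¹_n + γ²_m, z^m_n) ∈ ℝ³. Then for all (n, m) ∈ ℤ²: f^{m+1}_{n+1} − f^m_{n+1} − f^{m+1}_n + f^m_n = det[γ¹_{n+1} − γ¹_n, γ²_{m+1} − γ²_m] · (0, 0, 1). In particular, whenever this vector is nonzero, the line through the points f^{m+1}_{n+1} + f^m_n and f^m_{n+1} + f^{m+1}_n is parallel to (0,0,1), so all such lines are parallel to each other. -/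

import Mathlib

/-- Bidirectional sum: `Σ_k^n x_k = Σ_{k=1}^n x_k` for `n ≥ 1`, `0` for `n = 0`, and
`−Σ_{k=n+1}^0 x_k` for `n ≤ −1`. -/
noncomputable def bsum (x : ℤ → ℝ) (n : ℤ) : ℝ :=
  if 1 ≤ n then ∑ k ∈ Finset.Icc (1:ℤ) n, x k
  else if n = 0 then 0
  else -∑ k ∈ Finset.Icc (n+1) (0:ℤ), x k

/-- Determinant of the `2×2` matrix with columns `a`, `b` in `ℝ²`. -/
def det2 (a b : ℝ × ℝ) : ℝ := a.1 * b.2 - a.2 * b.1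

/-- For `f^m_n = (γ¹_n + γ²_m, z^m_n)` built from two discrete plane curves, the mixed second
difference is `det[γ¹_{n+1} − γ¹_n, γ²_{m+1} − γ²_m]·(0,0,1)`; in particular the segment from
`f^m_{n+1} + f^{m+1}_n` to `f^{m+1}_{n+1} + f^m_n` is parallel to `(0,0,1)`.
Here `f n m` denotes `f^m_n` and `z n m` denotes `z^m_n`. -/
theorem stmt13 (γ₁ γ₂ : ℤ → ℝ × ℝ)
    (z : ℤ → ℤ → ℝ)
    (hz : ∀ n m, z n m = det2 (γ₁ n) (γ₂ m)
      + bsum (fun k => det2 (γ₁ (k-1)) (γ₁ k)) n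
      - bsum (fun k => det2 (γ₂ (k-1)) (γ₂ k)) m)
    (f : ℤ → ℤ → (Fin 3 → ℝ))
    (hf : ∀ n m, f n m = ![(γ₁ n).1 + (γ₂ m).1, (γ₁ n).2 + (γ₂ m).2, z n m]) :
    ∀ n m : ℤ,
      f (n+1) (m+1) - f (n+1) m - f n (m+1) + f n m
        = det2 (γ₁ (n+1) - γ₁ n) (γ₂ (m+1) - γ₂ m) • ![(0:ℝ), 0, 1] ∧
      ∃ cval : ℝ, (f (n+1) (m+1) + f n m) - (f (n+1) m + f n (m+1))
        = cval • ![(0:ℝ), 0, 1] := by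
  intro n m
  have key : f (n+1) (m+1) - f (n+1) m - f n (m+1) + f n m
      = det2 (γ₁ (n+1) - γ₁ n) (γ₂ (m+1) - γ₂ m) • ![(0:ℝ), 0, 1] := by
    funext i
    simp only [hf, hz, Pi.add_apply, Pi.sub_apply, Pi.smul_apply, smul_eq_mul]
    fin_cases i <;> simp [det2, Prod.sub_def] <;> ring
  refine ⟨key, det2 (γ₁ (n+1) - γ₁ n) (γ₂ (m+1) - γ₂ m), ?_⟩
  rw [← key]
  funext i
  simp only [Pi.add_apply, Pi.sub_apply]
  ring
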